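/- Fix m₂ > 0 and ν > m₂ + 1/2, and define Λ(w) = ∫₀^w ∫₀^∞ h(u,t) du dt for 0 < w < 1, where h(u,t) = K₀ · u^{(m₁+m₂)/2−1} · t^{m₁/2−1} · (1−t)^{m₂/2−1} · (1 + m₁ut/ν)^{−(m₁+ν)/2} · (1 + m₂u(1−t)/ν)^{−(m₂+ν)/2} with m₁ = m₂ + 1/2 and K₀ = (m₁/ν)^{m₁/2}(m₂/ν)^{m₂/2} / (B(m₁/2, ν/2) · B(m₂/2, ν/2)). Then for all 0 < w < 1, A₂* · I(w) ≤ Λ(w) ≤ A₁* · I(w), where I(w) = (1/B((m₂+1/2)/2, m₂/2)) ∫₀^w t^{(m₂+1/2)/2−1}(1−t)^{m₂/2−1} dt is the regularized incomplete Beta function with parameters (m₂+0.5)/2 and m₂/2, and A₁*, A₂* are the constants A₁, A₂ evaluated at m₁ = m₂ + 1/2 and ν₁ = ν₂ = ν. (This makes precise that the limiting distribution Λ of W = Y₁/(Y₁+Y₂) is approximately the Beta distribution with shape parameters (m₂+0.5)/2 and m₂/2.) -/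

import Mathlib

open Real MeasureTheory Set

/-- Beta function `B(a,b) = Γ(a)Γ(b)/Γ(a+b)`. -/
noncomputable def Beta (a b : ℝ) : ℝ := Gamma a * Gamma b / Gamma (a + b)

/-- The normalizing constant `K₀`. -/
noncomputable def K₀ (m₁ m₂ ν₁ ν₂ : ℝ) : ℝ :=
  (m₁ / ν₁) ^ (m₁ / 2) * (m₂ / ν₂) ^ (m₂ / 2) /
    (Beta (m₁ / 2) (ν₁ / 2) * Beta (m₂ / 2) (ν₂ / 2))

/-- The joint density `h(u,t)` of `(U,W)` with common denominator degrees of freedom. -/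
noncomputable def hDens (m₁ m₂ ν : ℝ) (u t : ℝ) : ℝ :=
  K₀ m₁ m₂ ν ν * u ^ ((m₁ + m₂) / 2 - 1) * t ^ (m₁ / 2 - 1) * (1 - t) ^ (m₂ / 2 - 1) *
    (1 + m₁ * u * t / ν) ^ (-(m₁ + ν) / 2) *
    (1 + m₂ * u * (1 - t) / ν) ^ (-(m₂ + ν) / 2)

/-- The constant `A₁`. -/
noncomputable def A₁ (m₁ m₂ ν₁ ν₂ : ℝ) : ℝ :=
  (m₁ * ν₂ / (m₂ * ν₁)) ^ (m₁ / 2) * Beta ((m₁ + m₂) / 2) ((ν₂ - m₁) / 2) *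
    Beta (m₁ / 2) (m₂ / 2) / (Beta (m₁ / 2) (ν₁ / 2) * Beta (m₂ / 2) (ν₂ / 2))

/-- The constant `A₂`. -/
noncomputable def A₂ (m₁ m₂ ν₁ ν₂ : ℝ) : ℝ :=
  2 ^ ((m₁ + m₂) / 2) * (m₂ * ν₁ / (m₁ * ν₂)) ^ (m₂ / 2) *
    Beta ((m₁ + m₂) / 2) ((m₁ - m₂ + 2 * ν₁) / 2) *
    Beta (m₁ / 2) (m₂ / 2) / (Beta (m₁ / 2) (ν₁ / 2) * Beta (m₂ / 2) (ν₂ / 2))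

/-- The regularized incomplete Beta function with parameters `(m₂+0.5)/2` and `m₂/2`. -/
noncomputable def regIncBeta (m₂ : ℝ) (w : ℝ) : ℝ :=
  (1 / Beta ((m₂ + 1 / 2) / 2) (m₂ / 2)) *
    ∫ t in (0 : ℝ)..w, t ^ ((m₂ + 1 / 2) / 2 - 1) * (1 - t) ^ (m₂ / 2 - 1)

/- ### Auxiliary lemmas -/

lemma Beta_pos {a b : ℝ} (ha : 0 < a) (hb : 0 < b) : 0 < Beta a b :=
  div_pos (mul_pos (Gamma_pos_of_pos ha) (Gamma_pos_of_pos hb)) (Gamma_pos_of_pos (by linarith))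

lemma integrableOn_betaFun {a b : ℝ} (ha : 0 < a) (hb : 0 < b) :
    IntegrableOn (fun x : ℝ => x ^ (a - 1) * (1 - x) ^ (b - 1)) (Ioo 0 1) := by
  have h := (Complex.betaIntegral_convergent (u := a) (v := b) (by simpa using ha)
    (by simpa using hb))
  rw [intervalIntegrable_iff_integrableOn_Ioc_of_le zero_le_one] at h
  have h2 := (h.mono_set Ioo_subset_Ioc_self).re
  refine IntegrableOn.congr_fun h2 (fun x hx => ?_) measurableSet_Ioo
  have hx0 : (0:ℝ) ≤ x := hx.1.le
  have hx1 : (0:ℝ) ≤ 1 - x := by linarith [hx.2]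
  have e1 : ((x:ℂ)) ^ ((a:ℂ) - 1) = ((x ^ (a-1) : ℝ) : ℂ) := by
    rw [Complex.ofReal_cpow hx0]; push_cast; ring_nf
  have e2 : ((1:ℂ) - (x:ℂ)) ^ ((b:ℂ) - 1) = (((1 - x) ^ (b-1) : ℝ) : ℂ) := by
    rw [show ((1:ℂ) - (x:ℂ)) = (((1 - x : ℝ)):ℂ) by push_cast; ring,
      Complex.ofReal_cpow hx1]; push_cast; ring_nf
  simp [e1, e2, ← Complex.ofReal_mul]

lemma integral_betaFun {a b : ℝ} (ha : 0 < a) (hb : 0 < b) :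
    ∫ x in Ioo (0:ℝ) 1, x ^ (a - 1) * (1 - x) ^ (b - 1) = Beta a b := by
  have key : Complex.betaIntegral a b = ((Beta a b : ℝ) : ℂ) := by
    have h := Complex.Gamma_mul_Gamma_eq_betaIntegral (s := a) (t := b)
      (by simpa using ha) (by simpa using hb)
    rw [Complex.Gamma_ofReal, Complex.Gamma_ofReal,
      show ((a:ℂ) + b) = ((a + b : ℝ) : ℂ) by push_cast; ring, Complex.Gamma_ofReal] at h
    have hG : ((Gamma (a+b) : ℝ) : ℂ) ≠ 0 := by
      exact_mod_cast (Gamma_pos_of_pos (show (0:ℝ) < a + b by linarith)).ne'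
    rw [Beta, Complex.ofReal_div, Complex.ofReal_mul, eq_div_iff hG]
    linear_combination -h
  have eqInt : Complex.betaIntegral a b
      = ((∫ x in (0:ℝ)..1, x ^ (a - 1) * (1 - x) ^ (b - 1) : ℝ) : ℂ) := by
    rw [Complex.betaIntegral, ← intervalIntegral.integral_ofReal]
    refine intervalIntegral.integral_congr (fun x hx => ?_)
    rw [uIcc_of_le zero_le_one] at hx
    have hx0 : (0:ℝ) ≤ x := hx.1
    have hx1 : (0:ℝ) ≤ 1 - x := by linarith [hx.2]
    rw [show ((a:ℂ) - 1) = ((a - 1 : ℝ):ℂ) by push_cast; ring,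
      show ((b:ℂ) - 1) = ((b - 1 : ℝ):ℂ) by push_cast; ring,
      ← Complex.ofReal_cpow hx0, show ((1:ℂ) - (x:ℂ)) = (((1 - x : ℝ)):ℂ) by push_cast; ring,
      ← Complex.ofReal_cpow hx1, ← Complex.ofReal_mul]
  rw [eqInt] at key
  have := Complex.ofReal_injective key
  rw [← this, intervalIntegral.integral_of_le zero_le_one, integral_Ioc_eq_integral_Ioo]

lemma key_subst {c d lam : ℝ} (hc : 0 < c) (hd : 0 < d) (hl : 0 < lam) :
    IntegrableOn (fun u : ℝ => u ^ (c - 1) * (1 + lam * u) ^ (-(c + d))) (Ioi 0) ∧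
    ∫ u in Ioi (0:ℝ), u ^ (c - 1) * (1 + lam * u) ^ (-(c + d)) = lam ^ (-c) * Beta c d := by
  set f : ℝ → ℝ := fun x => x / (lam * (1 - x)) with hf
  set f' : ℝ → ℝ := fun x => 1 / (lam * (1 - x) ^ 2) with hf'
  have hderiv : ∀ x ∈ Ioo (0:ℝ) 1, HasDerivWithinAt f (f' x) (Ioo 0 1) x := by
    intro x hx
    have h1 : (0:ℝ) < 1 - x := by linarith [hx.2]
    have hden : lam * (1 - x) ≠ 0 := by positivity
    have : HasDerivAt f ((1 * (lam * (1 - x)) - x * (lam * (0 - 1))) / (lam * (1 - x)) ^ 2) x := by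
      exact (hasDerivAt_id x).div (((hasDerivAt_const x (1:ℝ)).sub (hasDerivAt_id x)).const_mul lam) hden
    have heq : (1 * (lam * (1 - x)) - x * (lam * (0 - 1))) / (lam * (1 - x)) ^ 2 = f' x := by
      simp only [hf']
      field_simp [hf']
      ring
    rw [heq] at this
    exact this.hasDerivWithinAt
  have hinj : InjOn f (Ioo 0 1) := by
    intro x hx y hy hxy
    have h1 : (0:ℝ) < 1 - x := by linarith [hx.2]
    have h2 : (0:ℝ) < 1 - y := by linarith [hy.2]
    rw [hf] at hxy
    field_simp at hxy
    nlinarith [hl]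
  have himg : f '' (Ioo 0 1) = Ioi 0 := by
    ext u
    constructor
    · rintro ⟨x, hx, rfl⟩
      have h1 : (0:ℝ) < 1 - x := by linarith [hx.2]
      exact mem_Ioi.mpr (div_pos hx.1 (by positivity))
    · intro hu
      rw [mem_Ioi] at hu
      refine ⟨lam * u / (1 + lam * u), ⟨?_, ?_⟩, ?_⟩
      · positivity
      · rw [div_lt_one (by positivity)]; linarith [mul_pos hl hu]
      · have h1 : (0:ℝ) < 1 + lam * u := by positivity
        rw [hf]
        field_simp
        ring
  set g : ℝ → ℝ := fun u => u ^ (c - 1) * (1 + lam * u) ^ (-(c + d)) with hg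
  have hpt : ∀ x ∈ Ioo (0:ℝ) 1, |f' x| • g (f x)
      = lam ^ (-c) * (x ^ (c - 1) * (1 - x) ^ (d - 1)) := by
    intro x hx
    have hx0 : (0:ℝ) < x := hx.1
    have h1 : (0:ℝ) < 1 - x := by linarith [hx.2]
    have hfx : (1:ℝ) + lam * f x = 1 / (1 - x) := by
      rw [hf]; field_simp; ring
    have habs : |f' x| = 1 / (lam * (1 - x) ^ 2) := by
      rw [hf', abs_of_pos]; positivity
    rw [smul_eq_mul, habs]
    simp only [hg]
    rw [hfx]
    simp only [hf]
    have e1 : (x / (lam * (1 - x))) ^ (c - 1)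
        = x ^ (c - 1) * (lam ^ (c-1))⁻¹ * ((1 - x) ^ (c-1))⁻¹ := by
      rw [div_rpow hx0.le (by positivity), mul_rpow hl.le h1.le]
      field_simp
    have e2 : ((1:ℝ) / (1 - x)) ^ (-(c + d)) = (1 - x) ^ (c + d) := by
      rw [one_div, inv_rpow h1.le, ← rpow_neg h1.le, neg_neg]
    have e3 : ((1:ℝ) - x) ^ (2:ℕ) = (1 - x) ^ (2:ℝ) := by
      rw [show ((2:ℝ)) = ((2:ℕ):ℝ) by norm_num, rpow_natCast]
    rw [e1, e2, e3]
    rw [show (lam ^ (c-1))⁻¹ = lam ^ (-(c-1)) by rw [← rpow_neg hl.le],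
        show ((1 - x) ^ (c-1))⁻¹ = (1 - x) ^ (-(c-1)) by rw [← rpow_neg h1.le]]
    rw [one_div, mul_inv, ← rpow_neg_one lam, ← rpow_neg_one ((1-x)^(2:ℝ)),
        ← rpow_mul h1.le]
    rw [show (lam:ℝ) ^ (-1:ℝ) * (1-x) ^ ((2:ℝ) * -1) * (x ^ (c-1) * lam ^ (-(c-1)) * (1-x) ^ (-(c-1)) * (1-x) ^ (c+d)) = x ^ (c-1) * (lam ^ (-1:ℝ) * lam ^ (-(c-1))) * ((1-x) ^ ((2:ℝ) * -1) * (1-x) ^ (-(c-1)) * (1-x) ^ (c+d)) by ring]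
    rw [← rpow_add hl, ← rpow_add h1, ← rpow_add h1]
    norm_num
    rw [show (-1 + (1 - c)) = -c by ring, show (-2 + (1 - c) + (c + d)) = d - 1 by ring]
    ring
  have hint : IntegrableOn g (Ioi 0) := by
    rw [← himg, integrableOn_image_iff_integrableOn_abs_deriv_smul measurableSet_Ioo hderiv hinj]
    refine IntegrableOn.congr_fun ?_ (fun x hx => (hpt x hx).symm) measurableSet_Ioo
    exact (integrableOn_betaFun hc hd).const_mul _
  refine ⟨hint, ?_⟩
  rw [← himg, integral_image_eq_integral_abs_deriv_smul measurableSet_Ioo hderiv hinj,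
    setIntegral_congr_fun measurableSet_Ioo hpt, integral_const_mul, integral_betaFun hc hd]

lemma prod_upper {α β e₁ e₂ s : ℝ} (hα : 0 ≤ α) (hβ : 0 ≤ β) (he12 : e₁ ≤ e₂)
    (he2 : e₂ ≤ 0) (hs : s ≤ α + β) (hs0 : 0 ≤ s) :
    (1+α) ^ e₁ * (1+β) ^ e₂ ≤ (1+s) ^ e₂ := by
  have h1 : (1+α) ^ e₁ ≤ (1+α) ^ e₂ := rpow_le_rpow_of_exponent_le (by linarith) he12
  have h2 : (1+α) ^ e₁ * (1+β) ^ e₂ ≤ (1+α) ^ e₂ * (1+β) ^ e₂ :=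
    mul_le_mul_of_nonneg_right h1 (rpow_nonneg (by linarith) _)
  refine h2.trans ?_
  rw [← mul_rpow (by linarith) (by linarith)]
  exact rpow_le_rpow_of_nonpos (by linarith) (by nlinarith) he2

lemma prod_lower {α β e₁ e₂ s : ℝ} (hα : 0 ≤ α) (hβ : 0 ≤ β) (he12 : e₁ ≤ e₂)
    (he1 : e₁ ≤ 0) (hs : α + β ≤ 2*s) (hs0 : 0 ≤ s) :
    (1+s) ^ (2*e₁) ≤ (1+α) ^ e₁ * (1+β) ^ e₂ := by
  have h1 : (1+β) ^ e₁ ≤ (1+β) ^ e₂ := rpow_le_rpow_of_exponent_le (by linarith) he12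
  have h2 : (1+α) ^ e₁ * (1+β) ^ e₁ ≤ (1+α) ^ e₁ * (1+β) ^ e₂ :=
    mul_le_mul_of_nonneg_left h1 (rpow_nonneg (by linarith) _)
  refine le_trans ?_ h2
  rw [← mul_rpow (by linarith) (by linarith)]
  have hsq : ((1+α) * (1+β)) ^ e₁ ≥ ((1+s)^(2:ℕ)) ^ e₁ := by
    by_cases hab : 0 < (1+α) * (1+β)
    · refine rpow_le_rpow_of_nonpos hab ?_ he1
      nlinarith [sq_nonneg (α - β), mul_nonneg (by linarith : (0:ℝ) ≤ 2*s - (α+β))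
        (by linarith : (0:ℝ) ≤ 2*s + (α+β))]
    · nlinarith
  refine le_trans ?_ hsq
  rw [← rpow_natCast (1+s) 2, ← rpow_mul (by linarith)]
  norm_num

lemma rpow_id1 {m₁ m₂ ν : ℝ} (h1 : 0 < m₁) (h2 : 0 < m₂) (hν : 0 < ν) :
    (m₁/ν) ^ (m₁/2) * (m₂/ν) ^ (m₂/2) * (m₂/ν) ^ (-((m₁+m₂)/2))
      = (m₁*ν/(m₂*ν)) ^ (m₁/2) := by
  rw [rpow_def_of_pos (div_pos h1 hν), rpow_def_of_pos (div_pos h2 hν),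
    rpow_def_of_pos (div_pos h2 hν), rpow_def_of_pos (div_pos (mul_pos h1 hν) (mul_pos h2 hν)),
    ← exp_add, ← exp_add]
  congr 1
  rw [log_div h1.ne' hν.ne', log_div h2.ne' hν.ne',
    log_div (mul_pos h1 hν).ne' (mul_pos h2 hν).ne', log_mul h1.ne' hν.ne',
    log_mul h2.ne' hν.ne']
  ring

lemma rpow_id2 {m₁ m₂ ν : ℝ} (h1 : 0 < m₁) (h2 : 0 < m₂) (hν : 0 < ν) :
    (m₁/ν) ^ (m₁/2) * (m₂/ν) ^ (m₂/2) * (m₁/(2*ν)) ^ (-((m₁+m₂)/2))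
      = 2 ^ ((m₁+m₂)/2) * (m₂*ν/(m₁*ν)) ^ (m₂/2) := by
  have h2ν : (0:ℝ) < 2*ν := by positivity
  rw [rpow_def_of_pos (div_pos h1 hν), rpow_def_of_pos (div_pos h2 hν),
    rpow_def_of_pos (div_pos h1 h2ν),
    rpow_def_of_pos (div_pos (mul_pos h2 hν) (mul_pos h1 hν)),
    rpow_def_of_pos (by norm_num : (0:ℝ) < 2),
    ← exp_add, ← exp_add, ← exp_add]
  congr 1
  rw [log_div h1.ne' hν.ne', log_div h2.ne' hν.ne',
    log_div h1.ne' h2ν.ne',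
    log_div (mul_pos h2 hν).ne' (mul_pos h1 hν).ne', log_mul h2.ne' hν.ne',
    log_mul h1.ne' hν.ne', log_mul (by norm_num : (2:ℝ) ≠ 0) hν.ne']
  ring

lemma cancel_aux {Cst B I A : ℝ} (hB : B ≠ 0) (h : Cst * B = A) :
    A * (1/B * I) = Cst * I := by
  subst h; field_simp

lemma hDens_meas (m₁ m₂ ν : ℝ) : Measurable (fun p : ℝ × ℝ => hDens m₁ m₂ ν p.2 p.1) := by
  unfold hDens
  fun_prop


set_option maxHeartbeats 1000000 in
/-- With `m₁ = m₂ + 1/2` and `ν₁ = ν₂ = ν`, the limiting CDF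
`Λ(w) = ∫₀^w ∫₀^∞ h(u,t) du dt` is bracketed by multiples of the regularized
incomplete Beta function with shape parameters `(m₂+0.5)/2` and `m₂/2`. -/
theorem limiting_cdf_beta_bounds (m₂ ν : ℝ) (hm₂ : 0 < m₂) (hν : m₂ + 1 / 2 < ν)
    (w : ℝ) (hw0 : 0 < w) (hw1 : w < 1) :
    A₂ (m₂ + 1 / 2) m₂ ν ν * regIncBeta m₂ w ≤
        (∫ t in (0 : ℝ)..w, ∫ u in Ioi (0 : ℝ), hDens (m₂ + 1 / 2) m₂ ν u t) ∧
      (∫ t in (0 : ℝ)..w, ∫ u in Ioi (0 : ℝ), hDens (m₂ + 1 / 2) m₂ ν u t) ≤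
        A₁ (m₂ + 1 / 2) m₂ ν ν * regIncBeta m₂ w := by
  set m₁ : ℝ := m₂ + 1 / 2 with hm₁
  clear_value m₁
  have hm₁0 : 0 < m₁ := by rw [hm₁]; linarith
  have hν0 : 0 < ν := by linarith
  have hm12 : m₂ ≤ m₁ := by rw [hm₁]; linarith
  have hc : 0 < (m₁ + m₂)/2 := by positivity
  have hd1 : 0 < (ν - m₁)/2 := by linarith
  have hd2 : 0 < (m₁ - m₂ + 2*ν)/2 := by linarith
  have hl1 : 0 < m₂/ν := div_pos hm₂ hν0
  have hl2 : 0 < m₁/(2*ν) := div_pos hm₁0 (by linarith)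
  -- Beta positivity
  have hB1 : 0 < Beta (m₁/2) (ν/2) := Beta_pos (by positivity) (by positivity)
  have hB2 : 0 < Beta (m₂/2) (ν/2) := Beta_pos (by positivity) (by positivity)
  have hBab : 0 < Beta (m₁/2) (m₂/2) := Beta_pos (by positivity) (by positivity)
  have hBc1 : 0 < Beta ((m₁+m₂)/2) ((ν - m₁)/2) := Beta_pos hc hd1
  have hBc2 : 0 < Beta ((m₁+m₂)/2) ((m₁ - m₂ + 2*ν)/2) := Beta_pos hc hd2
  have hK : 0 < K₀ m₁ m₂ ν ν := by
    rw [K₀]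
    exact div_pos (mul_pos (rpow_pos_of_pos (div_pos hm₁0 hν0) _)
      (rpow_pos_of_pos (div_pos hm₂ hν0) _)) (mul_pos hB1 hB2)
  -- the two key integrals
  obtain ⟨hIup, hVup⟩ := key_subst hc hd1 hl1
  obtain ⟨hIlo, hVlo⟩ := key_subst hc hd2 hl2
  rw [show -((m₁+m₂)/2 + (ν - m₁)/2) = -(m₂ + ν)/2 from by ring] at hIup hVup
  rw [show -((m₁+m₂)/2 + (m₁ - m₂ + 2*ν)/2) = 2 * (-(m₁ + ν)/2) from by ring] at hIlo hVlo
  set gU : ℝ → ℝ := fun u => u ^ ((m₁+m₂)/2 - 1) * (1 + m₂/ν * u) ^ (-(m₂ + ν)/2) with hgU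
  set gL : ℝ → ℝ := fun u => u ^ ((m₁+m₂)/2 - 1) * (1 + m₁/(2*ν) * u) ^ (2 * (-(m₁ + ν)/2))
    with hgL
  set D : ℝ → ℝ := fun t => t ^ (m₁/2 - 1) * (1 - t) ^ (m₂/2 - 1) with hD
  -- nonnegativity of the density
  have hnonneg : ∀ t ∈ Ioc (0:ℝ) w, ∀ u ∈ Ioi (0:ℝ), 0 ≤ hDens m₁ m₂ ν u t := by
    intro t ht u hu
    have ht0 : (0:ℝ) < t := ht.1
    have hu0 : (0:ℝ) < u := hu
    have ht1 : (0:ℝ) ≤ 1 - t := by linarith [ht.2, hw1]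
    have hα : (0:ℝ) ≤ m₁ * u * t / ν := by
      apply div_nonneg _ hν0.le
      exact mul_nonneg (mul_nonneg hm₁0.le (le_of_lt hu)) ht.1.le
    have hβ : (0:ℝ) ≤ m₂ * u * (1 - t) / ν := by
      apply div_nonneg _ hν0.le
      exact mul_nonneg (mul_nonneg hm₂.le (le_of_lt hu)) ht1
    rw [hDens]
    apply mul_nonneg
    apply mul_nonneg
    apply mul_nonneg
    apply mul_nonneg
    apply mul_nonneg hK.le
    all_goals exact rpow_nonneg (by linarith) _
  -- pointwise bounds
  have hptU : ∀ t ∈ Ioc (0:ℝ) w, ∀ u ∈ Ioi (0:ℝ),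
      hDens m₁ m₂ ν u t ≤ (K₀ m₁ m₂ ν ν * D t) * gU u := by
    intro t ht u hu
    have hu0 : (0:ℝ) < u := hu
    have ht0 : (0:ℝ) < t := ht.1
    have ht1 : (0:ℝ) < 1 - t := by linarith [ht.2, hw1]
    have hα : (0:ℝ) ≤ m₁ * u * t / ν := by positivity
    have hβ : (0:ℝ) ≤ m₂ * u * (1 - t) / ν := by positivity
    have key := prod_upper (α := m₁ * u * t / ν) (β := m₂ * u * (1 - t) / ν)
      (e₁ := -(m₁ + ν)/2) (e₂ := -(m₂ + ν)/2) (s := m₂/ν * u)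
      hα hβ (by linarith) (by linarith) ?_ (by positivity)
    · have hpre : (0:ℝ) ≤ K₀ m₁ m₂ ν ν * u ^ ((m₁+m₂)/2 - 1) * t ^ (m₁/2 - 1)
          * (1 - t) ^ (m₂/2 - 1) := by
        apply mul_nonneg (mul_nonneg (mul_nonneg hK.le (rpow_nonneg hu0.le _))
          (rpow_nonneg ht0.le _)) (rpow_nonneg ht1.le _)
      calc hDens m₁ m₂ ν u t
          = (K₀ m₁ m₂ ν ν * u ^ ((m₁+m₂)/2 - 1) * t ^ (m₁/2 - 1) * (1 - t) ^ (m₂/2 - 1))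
            * ((1 + m₁ * u * t / ν) ^ (-(m₁ + ν)/2)
              * (1 + m₂ * u * (1 - t) / ν) ^ (-(m₂ + ν)/2)) := by
            rw [hDens]; ring
        _ ≤ (K₀ m₁ m₂ ν ν * u ^ ((m₁+m₂)/2 - 1) * t ^ (m₁/2 - 1) * (1 - t) ^ (m₂/2 - 1))
            * (1 + m₂/ν * u) ^ (-(m₂ + ν)/2) := mul_le_mul_of_nonneg_left key hpre
        _ = (K₀ m₁ m₂ ν ν * D t) * gU u := by simp only [hD, hgU]; ring
    · rw [show m₁ * u * t / ν + m₂ * u * (1 - t) / ν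
          = (m₁ * u * t + m₂ * u * (1 - t)) / ν by ring, div_mul_eq_mul_div,
          div_le_div_iff_of_pos_right hν0]
      nlinarith [mul_nonneg (mul_nonneg hu0.le ht0.le) (sub_nonneg.mpr hm12)]
  have hptL : ∀ t ∈ Ioc (0:ℝ) w, ∀ u ∈ Ioi (0:ℝ),
      (K₀ m₁ m₂ ν ν * D t) * gL u ≤ hDens m₁ m₂ ν u t := by
    intro t ht u hu
    have hu0 : (0:ℝ) < u := hu
    have ht0 : (0:ℝ) < t := ht.1
    have ht1 : (0:ℝ) < 1 - t := by linarith [ht.2, hw1]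
    have hα : (0:ℝ) ≤ m₁ * u * t / ν := by positivity
    have hβ : (0:ℝ) ≤ m₂ * u * (1 - t) / ν := by positivity
    have key := prod_lower (α := m₁ * u * t / ν) (β := m₂ * u * (1 - t) / ν)
      (e₁ := -(m₁ + ν)/2) (e₂ := -(m₂ + ν)/2) (s := m₁/(2*ν) * u)
      hα hβ (by linarith) (by linarith) ?_ (by positivity)
    · have hpre : (0:ℝ) ≤ K₀ m₁ m₂ ν ν * u ^ ((m₁+m₂)/2 - 1) * t ^ (m₁/2 - 1)
          * (1 - t) ^ (m₂/2 - 1) := by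
        apply mul_nonneg (mul_nonneg (mul_nonneg hK.le (rpow_nonneg hu0.le _))
          (rpow_nonneg ht0.le _)) (rpow_nonneg ht1.le _)
      calc (K₀ m₁ m₂ ν ν * D t) * gL u
          = (K₀ m₁ m₂ ν ν * u ^ ((m₁+m₂)/2 - 1) * t ^ (m₁/2 - 1) * (1 - t) ^ (m₂/2 - 1))
            * (1 + m₁/(2*ν) * u) ^ (2 * (-(m₁ + ν)/2)) := by simp only [hD, hgL]; ring
        _ ≤ (K₀ m₁ m₂ ν ν * u ^ ((m₁+m₂)/2 - 1) * t ^ (m₁/2 - 1) * (1 - t) ^ (m₂/2 - 1))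
            * ((1 + m₁ * u * t / ν) ^ (-(m₁ + ν)/2)
              * (1 + m₂ * u * (1 - t) / ν) ^ (-(m₂ + ν)/2)) :=
            mul_le_mul_of_nonneg_left key hpre
        _ = hDens m₁ m₂ ν u t := by rw [hDens]; ring
    · have h2 : 2 * (m₁/(2*ν) * u) = m₁ * u / ν := by field_simp
      rw [h2, show m₁ * u * t / ν + m₂ * u * (1 - t) / ν
          = (m₁ * u * t + m₂ * u * (1 - t)) / ν by ring, div_le_div_iff_of_pos_right hν0]
      nlinarith [mul_nonneg (mul_nonneg hu0.le ht1.le) (sub_nonneg.mpr hm12)]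
  -- inner integral: integrability and bounds for each t
  have hAES : ∀ t : ℝ, AEStronglyMeasurable (fun u => hDens m₁ m₂ ν u t)
      (volume.restrict (Ioi 0)) := by
    intro t
    exact ((hDens_meas m₁ m₂ ν).comp (measurable_const.prodMk measurable_id)).aestronglyMeasurable
  have hIntU : ∀ t : ℝ, IntegrableOn (fun u => (K₀ m₁ m₂ ν ν * D t) * gU u) (Ioi 0) :=
    fun t => hIup.const_mul _
  have hIntL : ∀ t : ℝ, IntegrableOn (fun u => (K₀ m₁ m₂ ν ν * D t) * gL u) (Ioi 0) :=
    fun t => hIlo.const_mul _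
  have hint_t : ∀ t ∈ Ioc (0:ℝ) w, IntegrableOn (fun u => hDens m₁ m₂ ν u t) (Ioi 0) := by
    intro t ht
    refine Integrable.mono' (hIntU t) (hAES t) ?_
    filter_upwards [ae_restrict_mem measurableSet_Ioi] with u hu
    rw [Real.norm_eq_abs, abs_of_nonneg (hnonneg t ht u hu)]
    exact hptU t ht u hu
  set C1 : ℝ := K₀ m₁ m₂ ν ν * ((m₂/ν) ^ (-((m₁+m₂)/2)) * Beta ((m₁+m₂)/2) ((ν - m₁)/2))
    with hC1def
  set C2 : ℝ := K₀ m₁ m₂ ν ν * ((m₁/(2*ν)) ^ (-((m₁+m₂)/2))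
      * Beta ((m₁+m₂)/2) ((m₁ - m₂ + 2*ν)/2)) with hC2def
  have hgUb : ∀ t ∈ Ioc (0:ℝ) w, (∫ u in Ioi (0:ℝ), hDens m₁ m₂ ν u t) ≤ C1 * D t := by
    intro t ht
    calc (∫ u in Ioi (0:ℝ), hDens m₁ m₂ ν u t)
        ≤ ∫ u in Ioi (0:ℝ), (K₀ m₁ m₂ ν ν * D t) * gU u :=
          setIntegral_mono_on (hint_t t ht) (hIntU t) measurableSet_Ioi (hptU t ht)
      _ = (K₀ m₁ m₂ ν ν * D t) * ∫ u in Ioi (0:ℝ), gU u := integral_const_mul _ _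
      _ = C1 * D t := by rw [hgU, hVup, hC1def]; ring
  have hgLb : ∀ t ∈ Ioc (0:ℝ) w, C2 * D t ≤ (∫ u in Ioi (0:ℝ), hDens m₁ m₂ ν u t) := by
    intro t ht
    calc C2 * D t = (K₀ m₁ m₂ ν ν * D t) * ∫ u in Ioi (0:ℝ), gL u := by
          rw [hgL, hVlo, hC2def]; ring
      _ = ∫ u in Ioi (0:ℝ), (K₀ m₁ m₂ ν ν * D t) * gL u := (integral_const_mul _ _).symm
      _ ≤ ∫ u in Ioi (0:ℝ), hDens m₁ m₂ ν u t :=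
          setIntegral_mono_on (hIntL t) (hint_t t ht) measurableSet_Ioi (hptL t ht)
  -- outer integral
  have hgmeas : StronglyMeasurable (fun t => ∫ u in Ioi (0:ℝ), hDens m₁ m₂ ν u t) :=
    (hDens_meas m₁ m₂ ν).stronglyMeasurable.integral_prod_right'
  have hgpos : ∀ t ∈ Ioc (0:ℝ) w, 0 ≤ ∫ u in Ioi (0:ℝ), hDens m₁ m₂ ν u t := by
    intro t ht
    exact setIntegral_nonneg measurableSet_Ioi (fun u hu => hnonneg t ht u hu)
  have hDint : IntegrableOn D (Ioc 0 w) := by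
    refine (integrableOn_betaFun (a := m₁/2) (b := m₂/2) (by positivity)
      (by positivity)).mono_set ?_
    intro t ht
    exact ⟨ht.1, lt_of_le_of_lt ht.2 hw1⟩
  have hgint : IntegrableOn (fun t => ∫ u in Ioi (0:ℝ), hDens m₁ m₂ ν u t) (Ioc 0 w) := by
    refine Integrable.mono' (hDint.const_mul C1) hgmeas.aestronglyMeasurable.restrict ?_
    filter_upwards [ae_restrict_mem measurableSet_Ioc] with t ht
    rw [Real.norm_eq_abs, abs_of_nonneg (hgpos t ht)]
    exact hgUb t ht
  have houtU : (∫ t in Ioc (0:ℝ) w, ∫ u in Ioi (0:ℝ), hDens m₁ m₂ ν u t)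
      ≤ C1 * ∫ t in Ioc (0:ℝ) w, D t := by
    calc (∫ t in Ioc (0:ℝ) w, ∫ u in Ioi (0:ℝ), hDens m₁ m₂ ν u t)
        ≤ ∫ t in Ioc (0:ℝ) w, C1 * D t :=
          setIntegral_mono_on hgint (hDint.const_mul C1) measurableSet_Ioc hgUb
      _ = C1 * ∫ t in Ioc (0:ℝ) w, D t := integral_const_mul _ _
  have houtL : C2 * ∫ t in Ioc (0:ℝ) w, D t
      ≤ (∫ t in Ioc (0:ℝ) w, ∫ u in Ioi (0:ℝ), hDens m₁ m₂ ν u t) := by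
    calc C2 * ∫ t in Ioc (0:ℝ) w, D t = ∫ t in Ioc (0:ℝ) w, C2 * D t :=
          (integral_const_mul _ _).symm
      _ ≤ ∫ t in Ioc (0:ℝ) w, ∫ u in Ioi (0:ℝ), hDens m₁ m₂ ν u t :=
          setIntegral_mono_on (hDint.const_mul C2) hgint measurableSet_Ioc hgLb
  -- constants
  have hC1A : C1 * Beta (m₁/2) (m₂/2) = A₁ m₁ m₂ ν ν := by
    have hid := rpow_id1 hm₁0 hm₂ hν0
    rw [hC1def, A₁, K₀]
    generalize (m₁/ν) ^ (m₁/2) = X1 at hid ⊢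
    generalize (m₂/ν) ^ (m₂/2) = X2 at hid ⊢
    generalize (m₂/ν) ^ (-((m₁+m₂)/2)) = X3 at hid ⊢
    generalize (m₁*ν/(m₂*ν)) ^ (m₁/2) = Y at hid ⊢
    field_simp [hB1.ne', hB2.ne', hBab.ne']
    linear_combination hid
  have hC2A : C2 * Beta (m₁/2) (m₂/2) = A₂ m₁ m₂ ν ν := by
    have hid := rpow_id2 hm₁0 hm₂ hν0
    rw [hC2def, A₂, K₀]
    generalize (m₁/ν) ^ (m₁/2) = X1 at hid ⊢
    generalize (m₂/ν) ^ (m₂/2) = X2 at hid ⊢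
    generalize (m₁/(2*ν)) ^ (-((m₁+m₂)/2)) = X3 at hid ⊢
    generalize ((2:ℝ)) ^ ((m₁+m₂)/2) = Y1 at hid ⊢
    generalize (m₂*ν/(m₁*ν)) ^ (m₂/2) = Y2 at hid ⊢
    field_simp [hB1.ne', hB2.ne', hBab.ne']
    linear_combination hid
  -- regIncBeta rewriting
  have hreg : regIncBeta m₂ w = (1 / Beta (m₁/2) (m₂/2)) * ∫ t in Ioc (0:ℝ) w, D t := by
    rw [regIncBeta, intervalIntegral.integral_of_le hw0.le, ← hm₁, hD]
  have hA1reg : A₁ m₁ m₂ ν ν * regIncBeta m₂ w = C1 * ∫ t in Ioc (0:ℝ) w, D t := by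
    rw [hreg]
    exact cancel_aux hBab.ne' hC1A
  have hA2reg : A₂ m₁ m₂ ν ν * regIncBeta m₂ w = C2 * ∫ t in Ioc (0:ℝ) w, D t := by
    rw [hreg]
    exact cancel_aux hBab.ne' hC2A
  rw [intervalIntegral.integral_of_le hw0.le]
  exact ⟨hA2reg ▸ houtL, hA1reg ▸ houtU⟩
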